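/- Let s ∈ (0,1) and β ∈ (0,1). There exists μ = μ(β,s) > 0 such that for all a, b ∈ ℝⁿ, if ⟨b⟩ ≥ β·⟨a−b⟩ then ⟨a⟩^s ≤ ⟨b⟩^s + (1−μ)·⟨a−b⟩^s, where ⟨x⟩ = (1 + |x|²)^{1/2}. -/

import Mathlib

open Real

/-- The increments of `x ↦ x ^ s` are decreasing for `s ∈ (0,1)`. -/
lemma incr_antitone (s : ℝ) (hs0 : 0 < s) (hs1 : s < 1) {v u : ℝ} (hv : 0 < v) (hvu : v ≤ u) :
    (u + 1) ^ s - u ^ s ≤ (v + 1) ^ s - v ^ s := by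
  have key : AntitoneOn (fun x : ℝ => (x + 1) ^ s - x ^ s) (Set.Ici v) := by
    apply antitoneOn_of_deriv_nonpos (convex_Ici v)
    · apply ContinuousOn.sub
      · exact ((continuous_id.add continuous_const).continuousOn).rpow_const
          (fun x hx => Or.inr hs0.le)
      · exact continuousOn_id.rpow_const (fun x hx => Or.inr hs0.le)
    · intro x hx
      rw [interior_Ici] at hx
      have hx0 : 0 < x := lt_of_lt_of_le hv (le_of_lt hx)
      have h1 : HasDerivAt (fun x : ℝ => (x + 1) ^ s) (1 * s * (x + 1) ^ (s - 1)) x :=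
        ((hasDerivAt_id x).add_const 1).rpow_const (Or.inl (show (0:ℝ) < x + 1 by linarith).ne')
      have h2 : HasDerivAt (fun x : ℝ => x ^ s) (1 * s * x ^ (s - 1)) x :=
        (hasDerivAt_id x).rpow_const (Or.inl hx0.ne')
      exact ((h1.sub h2).differentiableAt).differentiableWithinAt
    · intro x hx
      rw [interior_Ici] at hx
      have hx0 : 0 < x := lt_of_lt_of_le hv (le_of_lt hx)
      have h1 : HasDerivAt (fun x : ℝ => (x + 1) ^ s) (1 * s * (x + 1) ^ (s - 1)) x :=
        ((hasDerivAt_id x).add_const 1).rpow_const (Or.inl (show (0:ℝ) < x + 1 by linarith).ne')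
      have h2 : HasDerivAt (fun x : ℝ => x ^ s) (1 * s * x ^ (s - 1)) x :=
        (hasDerivAt_id x).rpow_const (Or.inl hx0.ne')
      have hd : HasDerivAt (fun x : ℝ => (x + 1) ^ s - x ^ s)
          (1 * s * (x + 1) ^ (s - 1) - 1 * s * x ^ (s - 1)) x := h1.sub h2
      rw [hd.deriv]
      have hle : (x + 1) ^ (s - 1) ≤ x ^ (s - 1) :=
        (Real.rpow_lt_rpow_of_neg hx0 (by linarith) (by linarith)).le
      nlinarith
  exact key (Set.self_mem_Ici) hvu hvu

/-- Triangle-type inequality for the Japanese bracket. -/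
lemma bracket_triangle {u v : ℝ} (hu : 0 ≤ u) (hv : 0 ≤ v) :
    Real.sqrt (1 + (u + v) ^ 2) ≤ Real.sqrt (1 + u ^ 2) + Real.sqrt (1 + v ^ 2) := by
  have h1 : Real.sqrt (1 + u ^ 2) ^ 2 = 1 + u ^ 2 := Real.sq_sqrt (by positivity)
  have h2 : Real.sqrt (1 + v ^ 2) ^ 2 = 1 + v ^ 2 := Real.sq_sqrt (by positivity)
  have h3 : u ≤ Real.sqrt (1 + u ^ 2) := (Real.le_sqrt hu (by positivity)).2 (by linarith)
  have h4 : v ≤ Real.sqrt (1 + v ^ 2) := (Real.le_sqrt hv (by positivity)).2 (by linarith)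
  have h5 : Real.sqrt (1 + (u + v) ^ 2) ≤
      Real.sqrt ((Real.sqrt (1 + u ^ 2) + Real.sqrt (1 + v ^ 2)) ^ 2) := by
    apply Real.sqrt_le_sqrt
    nlinarith [Real.sqrt_nonneg (1 + u ^ 2), Real.sqrt_nonneg (1 + v ^ 2)]
  rwa [Real.sqrt_sq (by positivity)] at h5

theorem japanese_bracket_ineq (s β : ℝ) (hs : s ∈ Set.Ioo (0 : ℝ) 1) (hβ : β ∈ Set.Ioo (0 : ℝ) 1) :
    ∃ μ > (0 : ℝ), ∀ (n : ℕ) (a b : EuclideanSpace ℝ (Fin n)),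
      β * Real.sqrt (1 + ‖a - b‖ ^ 2) ≤ Real.sqrt (1 + ‖b‖ ^ 2) →
      Real.sqrt (1 + ‖a‖ ^ 2) ^ s ≤
        Real.sqrt (1 + ‖b‖ ^ 2) ^ s + (1 - μ) * Real.sqrt (1 + ‖a - b‖ ^ 2) ^ s := by
  obtain ⟨hs0, hs1⟩ := hs
  obtain ⟨hβ0, hβ1⟩ := hβ
  refine ⟨1 + β ^ s - (β + 1) ^ s, ?_, ?_⟩
  · -- positivity of μ : (1+β)^s < 1 + β^s
    have hb1 : (0:ℝ) < 1 + β := by linarith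
    have e1 := Real.rpow_add hb1 (s - 1) 1
    rw [sub_add_cancel, Real.rpow_one] at e1
    have e2 := Real.rpow_add hβ0 (s - 1) 1
    rw [sub_add_cancel, Real.rpow_one] at e2
    have h1 : (1 + β) ^ (s - 1) < 1 := Real.rpow_lt_one_of_one_lt_of_neg (by linarith) (by linarith)
    have h2 : (1 + β) ^ (s - 1) < β ^ (s - 1) :=
      Real.rpow_lt_rpow_of_neg hβ0 (by linarith) (by linarith)
    have e1' : (β + 1) ^ s = (1 + β) ^ (s - 1) * (1 + β) := by
      rw [show β + 1 = 1 + β by ring]; exact e1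
    nlinarith [Real.rpow_pos_of_pos hb1 (s - 1)]
  · intro n a b hab
    set B := Real.sqrt (1 + ‖b‖ ^ 2) with hB
    set C := Real.sqrt (1 + ‖a - b‖ ^ 2) with hC
    have hB1 : 1 ≤ B := Real.one_le_sqrt.2 (by nlinarith [sq_nonneg ‖b‖])
    have hC1 : 1 ≤ C := Real.one_le_sqrt.2 (by nlinarith [sq_nonneg ‖a - b‖])
    have hB0 : 0 < B := by linarith
    have hC0 : 0 < C := by linarith
    -- triangle
    have htri : Real.sqrt (1 + ‖a‖ ^ 2) ≤ B + C := by
      have hnorm : ‖a‖ ≤ ‖b‖ + ‖a - b‖ := by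
        calc ‖a‖ = ‖b + (a - b)‖ := by rw [show b + (a - b) = a by abel]
        _ ≤ ‖b‖ + ‖a - b‖ := norm_add_le _ _
      calc Real.sqrt (1 + ‖a‖ ^ 2) ≤ Real.sqrt (1 + (‖b‖ + ‖a - b‖) ^ 2) := by
            apply Real.sqrt_le_sqrt
            nlinarith [norm_nonneg a, norm_nonneg b, norm_nonneg (a - b)]
        _ ≤ B + C := bracket_triangle (norm_nonneg b) (norm_nonneg (a - b))
    have hA : Real.sqrt (1 + ‖a‖ ^ 2) ^ s ≤ (B + C) ^ s :=
      Real.rpow_le_rpow (Real.sqrt_nonneg _) htri hs0.le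
    -- scaling: u = B / C ≥ β
    set u := B / C with hu
    have hu0 : 0 < u := by positivity
    have huβ : β ≤ u := (le_div_iff₀ hC0).2 hab
    have hkey : (u + 1) ^ s - u ^ s ≤ (β + 1) ^ s - β ^ s := incr_antitone s hs0 hs1 hβ0 huβ
    have hCu : C * u = B := by rw [hu, mul_div_assoc', mul_div_cancel_left₀ B hC0.ne']
    have hBC : B + C = C * (u + 1) := by rw [mul_add, hCu]; ring
    have hmul : (B + C) ^ s = C ^ s * (u + 1) ^ s := by
      rw [hBC, Real.mul_rpow hC0.le (by positivity)]
    have hmul2 : C ^ s * u ^ s = B ^ s := by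
      rw [← Real.mul_rpow hC0.le hu0.le, hCu]
    have hCs : 0 < C ^ s := Real.rpow_pos_of_pos hC0 s
    calc Real.sqrt (1 + ‖a‖ ^ 2) ^ s ≤ (B + C) ^ s := hA
      _ = C ^ s * (u + 1) ^ s := hmul
      _ ≤ C ^ s * (u ^ s + ((β + 1) ^ s - β ^ s)) := by
          apply mul_le_mul_of_nonneg_left (by linarith) hCs.le
      _ = B ^ s + (1 - (1 + β ^ s - (β + 1) ^ s)) * C ^ s := by
          rw [mul_add, hmul2]; ring
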